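/- Let d ≥ 5 be a real number. Let B_d be the set of bad vertices of G with degree in [d, 2d), let B_d^* be the set of vertices u ∈ B_d such that no neighbor w of u satisfies |N(w) ∩ B_d| ≥ 6·d^{0.6}, and let V_{≥d} be the set of vertices of G of degree at least d. Then |B_d^*| ≤ 12·|V_{≥d}|/d^{0.4}. -/

import Mathlib

open Finset Real

/-- Let `d ≥ 5` be a real number. Let `B_d` be the set of bad vertices of `G` with degree in
`[d, 2d)` (a vertex `u` is bad if `∑_{w ∈ N(u)} deg(w)^{-1/2} < deg(u)^ε` with `ε = 1/40`),
let `B_d^*` be the set of vertices `u ∈ B_d` such that no neighbor `w` of `u` satisfies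
`|N(w) ∩ B_d| ≥ 6·d^{0.6}`, and let `V_{≥d}` be the set of vertices of `G` of degree at least
`d`. Then `|B_d^*| ≤ 12·|V_{≥d}|/d^{0.4}`. -/
theorem counting_bad_nodes {V : Type*} [Fintype V] [DecidableEq V]
    (G : SimpleGraph V) [DecidableRel G.Adj]
    (d : ℝ) (hd : 5 ≤ d)
    (Bd Bdstar Vged : Finset V)
    (hBd : ∀ u : V, u ∈ Bd ↔
      (d ≤ (G.degree u : ℝ) ∧ (G.degree u : ℝ) < 2 * d ∧
        ∑ w ∈ G.neighborFinset u, (G.degree w : ℝ) ^ (-(1 : ℝ) / 2)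
          < (G.degree u : ℝ) ^ ((1 : ℝ) / 40)))
    (hBdstar : ∀ u : V, u ∈ Bdstar ↔
      (u ∈ Bd ∧ ∀ w ∈ G.neighborFinset u,
        ¬ (6 * d ^ ((3 : ℝ) / 5) ≤ ((G.neighborFinset w ∩ Bd).card : ℝ))))
    (hVged : ∀ u : V, u ∈ Vged ↔ d ≤ (G.degree u : ℝ)) :
    (Bdstar.card : ℝ) ≤ 12 * (Vged.card : ℝ) / d ^ ((2 : ℝ) / 5) := by
  have hd0 : (0:ℝ) < d := by linarith
  -- numeric inequality
  have hnum : (2*d) ^ ((1:ℝ)/40) * d ^ ((1:ℝ)/2) ≤ d / 2 := by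
    have e1 : (2*d)^((1:ℝ)/40) = 2^((1:ℝ)/40) * d^((1:ℝ)/40) :=
      Real.mul_rpow (by norm_num) hd0.le
    have e2 : (2:ℝ)^((41:ℝ)/40) ≤ d^((19:ℝ)/40) := by
      have h5 : (5:ℝ)^((19:ℝ)/40) ≤ d^((19:ℝ)/40) :=
        Real.rpow_le_rpow (by norm_num) hd (by norm_num)
      refine le_trans ?_ h5
      have h2 : (((2:ℝ)^(41:ℕ)) ^ ((1:ℝ)/40)) ≤ (((5:ℝ)^(19:ℕ))^((1:ℝ)/40)) :=
        Real.rpow_le_rpow (by positivity) (by norm_num) (by norm_num)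
      rw [← Real.rpow_natCast 2 41, ← Real.rpow_natCast 5 19,
        ← Real.rpow_mul (by norm_num), ← Real.rpow_mul (by norm_num)] at h2
      norm_num at h2
      convert h2 using 2 <;> norm_num
    have e3 : d^((1:ℝ)/40) * d^((1:ℝ)/2) = d^((21:ℝ)/40) := by
      rw [← Real.rpow_add hd0]; norm_num
    have e5 : (2:ℝ)^((41:ℝ)/40) = 2 * 2^((1:ℝ)/40) := by
      rw [show (41:ℝ)/40 = 1 + 1/40 by norm_num, Real.rpow_add two_pos, Real.rpow_one]
    have e4 : d^((19:ℝ)/40) * d^((21:ℝ)/40) = d := by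
      rw [← Real.rpow_add hd0]; norm_num
    calc (2*d)^((1:ℝ)/40) * d^((1:ℝ)/2) = 2^((1:ℝ)/40) * d^((21:ℝ)/40) := by
          rw [e1, mul_assoc, e3]
      _ ≤ (d^((19:ℝ)/40)/2) * d^((21:ℝ)/40) := by
          refine mul_le_mul_of_nonneg_right ?_ (Real.rpow_nonneg hd0.le _)
          rw [e5] at e2; linarith
      _ = d/2 := by rw [div_mul_eq_mul_div, e4]
  -- Claim 1: each u in Bdstar has at least d/2 neighbors in Vged
  have claim1 : ∀ u ∈ Bdstar, d/2 ≤ ((G.neighborFinset u ∩ Vged).card : ℝ) := by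
    intro u hu
    obtain ⟨hub, -⟩ := (hBdstar u).1 hu
    obtain ⟨hd1, hd2, hsum⟩ := (hBd u).1 hub
    set L := G.neighborFinset u \ Vged with hL
    have hcard : ((G.neighborFinset u ∩ Vged).card : ℝ) + L.card = G.degree u := by
      have h := Finset.card_inter_add_card_sdiff (G.neighborFinset u) Vged
      rw [← G.card_neighborFinset_eq_degree]
      exact_mod_cast congrArg (Nat.cast (R := ℝ)) h
    have hLbound : (L.card : ℝ) * d ^ (-(1:ℝ)/2)
        ≤ ∑ w ∈ G.neighborFinset u, (G.degree w : ℝ) ^ (-(1:ℝ)/2) := by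
      calc (L.card:ℝ) * d ^ (-(1:ℝ)/2) = ∑ _w ∈ L, d ^ (-(1:ℝ)/2) := by
            rw [Finset.sum_const, nsmul_eq_mul]
        _ ≤ ∑ w ∈ L, (G.degree w : ℝ)^(-(1:ℝ)/2) := by
            refine Finset.sum_le_sum fun w hw => ?_
            have hw1 : w ∈ G.neighborFinset u := (Finset.mem_sdiff.1 hw).1
            have hwd : (G.degree w : ℝ) < d := by
              have h2 := (Finset.mem_sdiff.1 hw).2
              rw [hVged] at h2; exact lt_of_not_ge h2
            have hwpos : (0:ℝ) < G.degree w := by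
              have : G.Adj w u := ((SimpleGraph.mem_neighborFinset _ _ _).1 hw1).symm
              have : 0 < G.degree w := G.degree_pos_iff_exists_adj w |>.2 ⟨u, this⟩
              exact_mod_cast this
            exact Real.rpow_le_rpow_of_nonpos hwpos hwd.le (by norm_num)
        _ ≤ _ := Finset.sum_le_sum_of_subset_of_nonneg Finset.sdiff_subset
            (fun w _ _ => Real.rpow_nonneg (Nat.cast_nonneg _) _)
    have h2 : (L.card : ℝ) * d^(-(1:ℝ)/2) < (2*d)^((1:ℝ)/40) :=
      lt_of_le_of_lt hLbound (hsum.trans_le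
        (Real.rpow_le_rpow (by positivity) hd2.le (by norm_num)))
    have h3 : (L.card : ℝ) ≤ d/2 := by
      have heq : (L.card:ℝ) = ((L.card:ℝ) * d^(-(1:ℝ)/2)) * d^((1:ℝ)/2) := by
        rw [mul_assoc, ← Real.rpow_add hd0]; norm_num
      have := mul_le_mul_of_nonneg_right h2.le (Real.rpow_nonneg hd0.le ((1:ℝ)/2))
      rw [← heq] at this
      exact this.trans hnum
    linarith
  -- Claim 3: each w in Vged has at most 6 d^{3/5} neighbors in Bdstar
  have claim3 : ∀ w ∈ Vged, ((G.neighborFinset w ∩ Bdstar).card : ℝ) ≤ 6 * d^((3:ℝ)/5) := by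
    intro w _
    rcases (G.neighborFinset w ∩ Bdstar).eq_empty_or_nonempty with he | ⟨u, hu⟩
    · rw [he]; simp; positivity
    · have hu1 : u ∈ G.neighborFinset w := (Finset.mem_inter.1 hu).1
      have hu2 : u ∈ Bdstar := (Finset.mem_inter.1 hu).2
      obtain ⟨-, hall⟩ := (hBdstar u).1 hu2
      have hwN : w ∈ G.neighborFinset u := by
        rw [SimpleGraph.mem_neighborFinset] at hu1 ⊢; exact hu1.symm
      have hb := hall w hwN
      have hsub : G.neighborFinset w ∩ Bdstar ⊆ G.neighborFinset w ∩ Bd := by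
        refine Finset.inter_subset_inter_left ?_
        intro x hx; exact ((hBdstar x).1 hx).1
      have := Finset.card_le_card hsub
      push_neg at hb
      calc ((G.neighborFinset w ∩ Bdstar).card : ℝ)
          ≤ ((G.neighborFinset w ∩ Bd).card : ℝ) := by exact_mod_cast this
        _ ≤ 6 * d^((3:ℝ)/5) := hb.le
  -- double counting
  have key : ∑ u ∈ Bdstar, ((G.neighborFinset u ∩ Vged).card : ℝ)
      = ∑ w ∈ Vged, ((G.neighborFinset w ∩ Bdstar).card : ℝ) := by
    have h1 : ∀ (t : Finset V) (u : V),
        ((G.neighborFinset u ∩ t).card : ℝ) = ∑ w ∈ t, if G.Adj u w then (1:ℝ) else 0 := by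
      intro t u
      rw [show G.neighborFinset u ∩ t = t.filter (fun w => G.Adj u w) by
        ext x; simp [SimpleGraph.mem_neighborFinset, and_comm]]
      rw [Finset.card_filter]
      push_cast
      rfl
    calc ∑ u ∈ Bdstar, ((G.neighborFinset u ∩ Vged).card : ℝ)
        = ∑ u ∈ Bdstar, ∑ w ∈ Vged, (if G.Adj u w then (1:ℝ) else 0) := by
          exact Finset.sum_congr rfl fun u _ => h1 Vged u
      _ = ∑ w ∈ Vged, ∑ u ∈ Bdstar, (if G.Adj u w then (1:ℝ) else 0) := Finset.sum_comm
      _ = ∑ w ∈ Vged, ((G.neighborFinset w ∩ Bdstar).card : ℝ) := by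
          refine Finset.sum_congr rfl fun w _ => ?_
          rw [h1 Bdstar w]
          exact Finset.sum_congr rfl fun u _ => if_congr (G.adj_comm u w) rfl rfl
  have lower : (Bdstar.card : ℝ) * (d/2) ≤ ∑ u ∈ Bdstar, ((G.neighborFinset u ∩ Vged).card : ℝ) := by
    calc (Bdstar.card : ℝ) * (d/2) = ∑ _u ∈ Bdstar, (d/2) := by
          rw [Finset.sum_const, nsmul_eq_mul]
      _ ≤ _ := Finset.sum_le_sum claim1
  have upper : ∑ w ∈ Vged, ((G.neighborFinset w ∩ Bdstar).card : ℝ)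
      ≤ (Vged.card : ℝ) * (6 * d^((3:ℝ)/5)) := by
    calc ∑ w ∈ Vged, ((G.neighborFinset w ∩ Bdstar).card : ℝ)
        ≤ ∑ _w ∈ Vged, (6 * d^((3:ℝ)/5)) := Finset.sum_le_sum claim3
      _ = (Vged.card : ℝ) * (6 * d^((3:ℝ)/5)) := by rw [Finset.sum_const, nsmul_eq_mul]
  have main : (Bdstar.card : ℝ) * (d/2) ≤ (Vged.card : ℝ) * (6 * d^((3:ℝ)/5)) := by
    rw [key] at lower; exact lower.trans upper
  -- finish
  have hsplit : d = d^((2:ℝ)/5) * d^((3:ℝ)/5) := by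
    rw [← Real.rpow_add hd0]; norm_num
  have hp2 : (0:ℝ) < d^((2:ℝ)/5) := Real.rpow_pos_of_pos hd0 _
  have hp3 : (0:ℝ) < d^((3:ℝ)/5) := Real.rpow_pos_of_pos hd0 _
  rw [le_div_iff₀ hp2]
  nlinarith [main, hsplit, hp2, hp3]
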